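/- Let (Y_n) be a submartingale with values in [0,1] adapted to a filtration F_n, and suppose there exist 0<α<β<1 and ρ>0 such that E[Y_{n+1}-Y_n | F_n] ≥ ρ on the event {Y_n ∈ (α,β)}. Then the almost-sure limit Y of Y_n satisfies P(Y ∈ (α,β)) = 0. -/

import Mathlib

open MeasureTheory Filter

/-- A `[0,1]`-valued submartingale with conditional drift at least `ρ > 0` on
the event `{Y_n ∈ (α,β)}` has an almost-sure limit that avoids `(α,β)`. -/
theorem limit_avoids_drift_interval {Ω : Type*} {m0 : MeasurableSpace Ω}
    {μ : Measure Ω} [IsProbabilityMeasure μ] (ℱ : Filtration ℕ m0)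
    (Y : ℕ → Ω → ℝ) (hsub : Submartingale Y ℱ μ)
    (hbd : ∀ n ω, Y n ω ∈ Set.Icc (0 : ℝ) 1)
    (α β ρ : ℝ) (hα : 0 < α) (hαβ : α < β) (hβ : β < 1) (hρ : 0 < ρ)
    (hdrift : ∀ n, ∀ᵐ ω ∂μ, Y n ω ∈ Set.Ioo α β →
      ρ ≤ (μ[Y (n+1) - Y n | ℱ n]) ω)
    (Ylim : Ω → ℝ)
    (hconv : ∀ᵐ ω ∂μ, Tendsto (fun n => Y n ω) atTop (nhds (Ylim ω))) :
    μ {ω | Ylim ω ∈ Set.Ioo α β} = 0 := by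
  set A : ℕ → Set Ω := fun n => {ω | Y n ω ∈ Set.Ioo α β} with hA
  have hAmeas : ∀ n, MeasurableSet (A n) := fun n =>
    (ℱ.le n) _ (((hsub.1 n).measurable) measurableSet_Ioo)
  -- key integral inequality
  have key : ∀ n, ρ * (μ (A n)).toReal ≤ (∫ ω, Y (n+1) ω ∂μ) - ∫ ω, Y n ω ∂μ := by
    intro n
    have hint1 := hsub.integrable (n+1)
    have hint0 := hsub.integrable n
    have hg : Integrable (μ[Y (n+1) - Y n | ℱ n]) μ := integrable_condExp
    have h0 := hsub.condExp_sub_nonneg (Nat.le_succ n)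
    have hmono : (A n).indicator (fun _ => ρ) ≤ᵐ[μ] μ[Y (n+1) - Y n | ℱ n] := by
      filter_upwards [h0, hdrift n] with ω h0ω hdω
      by_cases hω : ω ∈ A n
      · simpa [Set.indicator_of_mem hω] using hdω hω
      · simpa [Set.indicator_of_notMem hω] using h0ω
    have hind : Integrable ((A n).indicator (fun _ => ρ)) μ :=
      (integrable_const ρ).indicator (hAmeas n)
    have h1 : ∫ ω, (A n).indicator (fun _ => ρ) ω ∂μ ≤ ∫ ω, (μ[Y (n+1) - Y n | ℱ n]) ω ∂μ :=
      integral_mono_ae hind hg hmono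
    rw [integral_indicator_const ρ (hAmeas n)] at h1
    rw [integral_condExp (ℱ.le n)] at h1
    simp only [Pi.sub_apply] at h1
    rw [integral_sub hint1 hint0] at h1
    simpa [smul_eq_mul, mul_comm, measureReal_def] using h1
  -- partial sums bounded
  have hpart : ∀ N, ∑ n ∈ Finset.range N, (μ (A n)).toReal ≤ 1 / ρ := by
    intro N
    have h2 : ∑ n ∈ Finset.range N, ρ * (μ (A n)).toReal ≤
        (∫ ω, Y N ω ∂μ) - ∫ ω, Y 0 ω ∂μ := by
      calc ∑ n ∈ Finset.range N, ρ * (μ (A n)).toReal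
          ≤ ∑ n ∈ Finset.range N, ((∫ ω, Y (n+1) ω ∂μ) - ∫ ω, Y n ω ∂μ) :=
            Finset.sum_le_sum fun n _ => key n
        _ = (∫ ω, Y N ω ∂μ) - ∫ ω, Y 0 ω ∂μ :=
            Finset.sum_range_sub (fun n => ∫ ω, Y n ω ∂μ) N
    have hle1 : ∫ ω, Y N ω ∂μ ≤ 1 := by
      calc ∫ ω, Y N ω ∂μ ≤ ∫ _, (1 : ℝ) ∂μ :=
            integral_mono (hsub.integrable N) (integrable_const 1) fun ω => (hbd N ω).2
        _ = 1 := by simp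
    have hge0 : 0 ≤ ∫ ω, Y 0 ω ∂μ :=
      integral_nonneg fun ω => (hbd 0 ω).1
    have h3 : ρ * ∑ n ∈ Finset.range N, (μ (A n)).toReal ≤ 1 := by
      rw [Finset.mul_sum]
      linarith
    rw [le_div_iff₀ hρ, mul_comm]
    exact h3
  -- tsum finite
  have hsum : (∑' n, μ (A n)) ≠ ⊤ := by
    have hle : (∑' n, μ (A n)) ≤ ENNReal.ofReal (1 / ρ) := by
      rw [ENNReal.tsum_eq_iSup_sum]
      refine iSup_le fun s => ?_
      obtain ⟨N, hN⟩ := s.exists_nat_subset_range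
      calc ∑ n ∈ s, μ (A n) ≤ ∑ n ∈ Finset.range N, μ (A n) :=
            Finset.sum_le_sum_of_subset hN
        _ = ENNReal.ofReal (∑ n ∈ Finset.range N, (μ (A n)).toReal) := by
            rw [ENNReal.ofReal_sum_of_nonneg fun n _ => ENNReal.toReal_nonneg]
            exact Finset.sum_congr rfl fun n _ => (ENNReal.ofReal_toReal (measure_ne_top μ _)).symm
        _ ≤ ENNReal.ofReal (1 / ρ) := ENNReal.ofReal_le_ofReal (hpart N)
    exact lt_of_le_of_lt hle ENNReal.ofReal_lt_top |>.ne
  have hnull : μ (limsup A atTop) = 0 := measure_limsup_atTop_eq_zero hsum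
  have hsub' : {ω | Ylim ω ∈ Set.Ioo α β} ≤ᵐ[μ] (limsup A atTop : Set Ω) := by
    filter_upwards [hconv] with ω hω hmem
    show ω ∈ limsup A atTop
    rw [Filter.mem_limsup_iff_frequently_mem]
    exact ((hω.eventually (isOpen_Ioo.eventually_mem hmem)).frequently)
  exact le_antisymm ((measure_mono_ae hsub').trans hnull.le) zero_le
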